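/- arXiv:2308.12255 — 3 statements merged into one kernel-verified Lean document; each statement's English description precedes it below -/
import Mathlib

section
/- Suppose c_{L,-} and c_{L,+} satisfy the termination condition e^{+α_L/2}·c_{L,-} + e^{-α_L/2}·c_{L,+} = 0, and c₀ is related to c_L by the recursion of the layerwise-constant PML model (c_{L,-} = (∏_{l=0}^{L-1} e^{+α_l/2}/e^{-α_{l+1}/2})·c_{0,-}, c_{L,+} = (∏_{l=0}^{L-1} e^{-α_l/2}/e^{+α_{l+1}/2})·c_{0,+}). If c_{0,+} ≠ 0, then the reflection coefficient satisfies c_{0,-}/c_{0,+} = -e^{-α₀}·∏_{l=1}^{L} (e^{-α_l})². -/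
open Complex Finset

lemma stmt4_aux (α : ℕ → ℂ) : ∀ L : ℕ,
    ∑ l ∈ Finset.range L, (α l / 2 + α (l + 1) / 2) + α L / 2
      = α 0 / 2 + ∑ l ∈ Finset.Icc 1 L, α l := by
  intro L
  induction L with
  | zero => simp
  | succ n ih =>
      rw [Finset.sum_range_succ, Finset.sum_Icc_succ_top (by omega : 1 ≤ n + 1)]
      linear_combination ih

theorem stmt4 (L : ℕ) (hL : 1 ≤ L) (α : ℕ → ℂ) (c0m c0p cLm cLp : ℂ)
    (hterm : Complex.exp (α L / 2) * cLm + Complex.exp (-(α L) / 2) * cLp = 0)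
    (hm : cLm = (∏ l ∈ Finset.range L,
      Complex.exp (α l / 2) / Complex.exp (-(α (l + 1)) / 2)) * c0m)
    (hp : cLp = (∏ l ∈ Finset.range L,
      Complex.exp (-(α l) / 2) / Complex.exp (α (l + 1) / 2)) * c0p)
    (hc : c0p ≠ 0) :
    c0m / c0p = -Complex.exp (-(α 0)) * ∏ l ∈ Finset.Icc 1 L, (Complex.exp (-(α l)))^2 := by
  set S : ℂ := ∑ l ∈ Finset.range L, (α l / 2 + α (l + 1) / 2) with hS
  have e1 : (∏ l ∈ Finset.range L,
      Complex.exp (α l / 2) / Complex.exp (-(α (l + 1)) / 2)) = Complex.exp S := by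
    rw [hS, Complex.exp_sum]
    refine Finset.prod_congr rfl fun l _ => ?_
    rw [← Complex.exp_sub]
    ring_nf
  have e2 : (∏ l ∈ Finset.range L,
      Complex.exp (-(α l) / 2) / Complex.exp (α (l + 1) / 2)) = Complex.exp (-S) := by
    rw [hS, ← Finset.sum_neg_distrib, Complex.exp_sum]
    refine Finset.prod_congr rfl fun l _ => ?_
    rw [← Complex.exp_sub]
    ring_nf
  have e3 : (∏ l ∈ Finset.Icc 1 L, (Complex.exp (-(α l)))^2)
      = Complex.exp (∑ l ∈ Finset.Icc 1 L, (-2 * α l)) := by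
    rw [Complex.exp_sum]
    refine Finset.prod_congr rfl fun l _ => ?_
    rw [sq, ← Complex.exp_add]
    ring_nf
  rw [hm, e1] at hterm
  rw [hp, e2] at hterm
  have key := stmt4_aux α L
  rw [div_eq_iff hc, e3]
  have hne : Complex.exp (α L / 2) * Complex.exp S ≠ 0 :=
    mul_ne_zero (Complex.exp_ne_zero _) (Complex.exp_ne_zero _)
  have hc0m : c0m = -(Complex.exp (-(α L) / 2) * Complex.exp (-S) * c0p)
      / (Complex.exp (α L / 2) * Complex.exp S) := by
    field_simp
    rw [neg_div] at hterm
    linear_combination hterm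
  rw [hc0m, ← Complex.exp_add, ← Complex.exp_add]
  have hexp : (-(α L) / 2 + -S) = (-(α 0) + ∑ l ∈ Finset.Icc 1 L, (-2 * α l)) + (α L / 2 + S) := by
    have h2 : ∑ l ∈ Finset.Icc 1 L, (-2 * α l) = -2 * ∑ l ∈ Finset.Icc 1 L, α l := by
      rw [Finset.mul_sum]
    rw [h2]
    linear_combination (-2 : ℂ) * key
  rw [hexp, Complex.exp_add, Complex.exp_add]
  field_simp
end

section
/- For s ∈ ℂ with Re(s) > 0, k ∈ ℝ, and γ the principal branch of √(s² + k²) chosen so that γ = +k when s = 0 (equivalently, Re(γ) > 0 on this branch), one has Re(γ/(a·s + b)) > 0 for all real a, b > 0. -/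
theorem stmt7 (s γ : ℂ) (hs : 0 < s.re) (k : ℝ)
    (hγsq : γ ^ 2 = s ^ 2 + (k : ℂ) ^ 2) (hγre : 0 < γ.re)
    (a b : ℝ) (ha : 0 < a) (hb : 0 < b) :
    0 < (γ / ((a : ℂ) * s + (b : ℂ))).re := by
  have him : γ.re * γ.im = s.re * s.im := by
    have h := congrArg Complex.im hγsq
    simp [pow_two, Complex.mul_im, Complex.add_im] at h
    linarith
  set w : ℂ := (a : ℂ) * s + (b : ℂ) with hw
  have hwre : w.re = a * s.re + b := by simp [hw]
  have hwim : w.im = a * s.im := by simp [hw]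
  have hwre' : 0 < w.re := by rw [hwre]; positivity
  have hns : 0 < Complex.normSq w := by
    apply Complex.normSq_pos.mpr
    intro h; rw [h] at hwre'; simp at hwre'
  rw [Complex.div_re, hwre, hwim]
  rw [← add_div]
  apply div_pos _ hns
  have h2 : γ.re * (γ.im * (a * s.im)) = a * s.re * s.im ^ 2 := by
    linear_combination (a * s.im) * him
  have key : 0 < γ.re * (γ.re * (a * s.re + b) + γ.im * (a * s.im)) := by
    nlinarith [mul_pos (mul_pos hγre hγre) (show (0:ℝ) < a * s.re + b by positivity),
      mul_nonneg (mul_nonneg ha.le hs.le) (sq_nonneg s.im)]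
  nlinarith [key, hγre]
end

section
/- For every N ∈ ℕ, the polynomial p_N(z) = ₁F₁(-N; -2N; z) = ∑_{n=0}^{N} (z^n/n!)·((N!·(2N-n)!)/((N-n)!·(2N)!)) satisfies the Padé property: exp(z)·p_N(-z) - p_N(z) has a zero of order at least 2N+1 at z = 0 (i.e., its k-th derivative at 0 vanishes for all k ≤ 2N). -/
open Finset

-- finite difference of a descending factorial
private lemma descF_diff (a m : ℕ) (ha : 1 ≤ a) :
    ((a.descFactorial m : ℂ)) - ((a - 1).descFactorial m : ℂ)
      = (m : ℂ) * ((a - 1).descFactorial (m - 1) : ℂ) := by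
  obtain ⟨b, rfl⟩ : ∃ b, a = b + 1 := ⟨a - 1, by omega⟩
  cases m with
  | zero => simp
  | succ m' =>
    simp only [Nat.succ_descFactorial_succ, Nat.add_sub_cancel, Nat.descFactorial_succ]
    by_cases hb : m' ≤ b
    · push_cast [hb]
      ring
    · have h0 : b.descFactorial m' = 0 :=
        Nat.descFactorial_eq_zero_iff_lt.mpr (by omega)
      simp [h0]

private lemma key (k : ℕ) : ∀ m c : ℕ, k ≤ c →
    ∑ n ∈ range (k + 1), (-1 : ℂ) ^ n * (k.choose n : ℂ) * ((c - n).descFactorial m : ℂ)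
      = (m.descFactorial k : ℂ) * ((c - k).descFactorial (m - k) : ℂ) := by
  induction k with
  | zero => intro m c _; simp
  | succ k ih =>
    intro m c hc
    have H := Finset.sum_choose_succ_mul (R := ℂ)
      (fun i _ => (-1 : ℂ) ^ i * ((c - i).descFactorial m : ℂ)) k
    have hL : ∑ n ∈ range (k + 1 + 1),
        (-1 : ℂ) ^ n * ((k + 1).choose n : ℂ) * ((c - n).descFactorial m : ℂ)
        = ∑ i ∈ range (k + 2), (((k + 1).choose i : ℕ) : ℂ)
            * ((-1 : ℂ) ^ i * ((c - i).descFactorial m : ℂ)) := by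
      refine Finset.sum_congr rfl fun n _ => by ring
    rw [hL, H]
    have hstep : ∀ i ∈ range (k + 1),
        ((k.choose i : ℕ) : ℂ) * ((-1 : ℂ) ^ i * ((c - i).descFactorial m : ℂ))
          + ((k.choose i : ℕ) : ℂ) * ((-1 : ℂ) ^ (i + 1) * ((c - (i + 1)).descFactorial m : ℂ))
        = (m : ℂ) * ((-1 : ℂ) ^ i * (k.choose i : ℂ)
            * (((c - 1) - i).descFactorial (m - 1) : ℂ)) := by
      intro i hi
      have hi' : i ≤ k := by simpa [Nat.lt_succ_iff] using hi
      have h1 : 1 ≤ c - i := by omega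
      have h2 : c - (i + 1) = (c - i) - 1 := by omega
      have h3 : (c - 1) - i = (c - i) - 1 := by omega
      rw [h2, h3]
      have := descF_diff (c - i) m h1
      linear_combination ((-1 : ℂ) ^ i * (k.choose i : ℂ)) * this
    rw [← Finset.sum_add_distrib, Finset.sum_congr rfl hstep, ← Finset.mul_sum]
    have h4 : k ≤ c - 1 := by omega
    rw [ih (m - 1) (c - 1) h4]
    have e1 : c - 1 - k = c - (k + 1) := by omega
    have e2 : m - 1 - k = m - (k + 1) := by omega
    have e3 : m.descFactorial (k + 1) = m * (m - 1).descFactorial k := by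
      cases m with
      | zero => simp
      | succ m' => rw [Nat.succ_descFactorial_succ]; simp
    rw [e1, e2, e3]
    push_cast
    ring

private lemma contDiff_poly (s : Finset ℕ) (c : ℕ → ℂ) :
    ContDiff ℂ ⊤ (fun z : ℂ => ∑ n ∈ s, c n * z ^ n) := by
  apply ContDiff.sum
  intro i _
  exact contDiff_const.mul (contDiff_id.pow i)

private lemma iter_poly (s : Finset ℕ) (c : ℕ → ℂ) (m : ℕ) :
    iteratedDeriv m (fun z : ℂ => ∑ n ∈ s, c n * z ^ n)
      = fun z => ∑ n ∈ s, c n * ((n.descFactorial m : ℂ) * z ^ (n - m)) := by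
  induction m with
  | zero => simp
  | succ m ih =>
    rw [iteratedDeriv_succ, ih]
    funext z
    rw [deriv_fun_sum (fun n _ => by fun_prop)]
    refine Finset.sum_congr rfl fun n _ => ?_
    rw [deriv_const_mul _ (by fun_prop), deriv_const_mul _ (by fun_prop), deriv_pow_field]
    rw [Nat.descFactorial_succ, Nat.sub_sub]
    push_cast
    ring

private lemma iter_exp_mul (q : ℂ → ℂ) (hq : ContDiff ℂ ⊤ q) (k : ℕ) :
    iteratedDeriv k (fun z => Complex.exp z * q z)
      = fun z => ∑ i ∈ range (k + 1),
          (k.choose i : ℂ) * (Complex.exp z * iteratedDeriv i q z) := by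
  have hdiff : ∀ i, Differentiable ℂ (iteratedDeriv i q) := fun i =>
    hq.differentiable_iteratedDeriv i (by simp)
  induction k with
  | zero => simp
  | succ k ih =>
    rw [iteratedDeriv_succ, ih]
    funext z
    rw [deriv_fun_sum (fun i _ => by
      exact (differentiable_const _).mul
        (Complex.differentiable_exp.mul (hdiff i)) |>.differentiableAt)]
    have hterm : ∀ i ∈ range (k + 1),
        deriv (fun z => (k.choose i : ℂ) * (Complex.exp z * iteratedDeriv i q z)) z
          = (k.choose i : ℂ) * (Complex.exp z * iteratedDeriv i q z)
            + (k.choose i : ℂ) * (Complex.exp z * iteratedDeriv (i + 1) q z) := by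
      intro i _
      rw [deriv_const_mul _ ((Complex.differentiable_exp.fun_mul (hdiff i)).differentiableAt),
        deriv_fun_mul Complex.differentiable_exp.differentiableAt (hdiff i).differentiableAt,
        Complex.deriv_exp, iteratedDeriv_succ]
      ring
    rw [Finset.sum_congr rfl hterm, Finset.sum_add_distrib]
    have H := Finset.sum_choose_succ_mul (R := ℂ)
      (fun i _ => Complex.exp z * iteratedDeriv i q z) k
    exact H.symm

private lemma descF_pow_zero (n i : ℕ) :
    ((n.descFactorial i : ℂ)) * (0 : ℂ) ^ (n - i) = if n = i then (i.factorial : ℂ) else 0 := by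
  rcases lt_trichotomy n i with h | rfl | h
  · simp [Nat.descFactorial_eq_zero_iff_lt.mpr h, h.ne]
  · simp [Nat.descFactorial_self, Nat.sub_self]
  · simp [zero_pow (Nat.sub_ne_zero_of_lt h), h.ne']

private lemma eval0 (s : Finset ℕ) (c : ℕ → ℂ) (i : ℕ) :
    ∑ n ∈ s, c n * ((n.descFactorial i : ℂ) * (0 : ℂ) ^ (n - i))
      = if i ∈ s then c i * (i.factorial : ℂ) else 0 := by
  rw [Finset.sum_congr rfl fun n _ => by rw [descF_pow_zero]]
  simp only [mul_ite, mul_zero]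
  exact Finset.sum_ite_eq' s i fun n => c n * (i.factorial : ℂ)

private lemma descF_cast {a b : ℕ} (h : b ≤ a) :
    ((a.descFactorial b : ℕ) : ℂ) = (a.factorial : ℂ) / ((a - b).factorial : ℂ) := by
  have := Nat.factorial_mul_descFactorial h
  have h0 : ((a - b).factorial : ℂ) ≠ 0 := Nat.cast_ne_zero.mpr (Nat.factorial_ne_zero _)
  field_simp
  rw [mul_comm]
  exact_mod_cast congrArg (Nat.cast : ℕ → ℂ) this

/-- `p N z = ₁F₁(-N; -2N; z)`, the numerator polynomial of the `[N/N]` Padé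
approximant of `exp`. -/
noncomputable def padeP (N : ℕ) (z : ℂ) : ℂ :=
  ∑ n ∈ Finset.range (N + 1),
    z ^ n / (Nat.factorial n : ℂ) *
      (((Nat.factorial N : ℂ) * (Nat.factorial (2 * N - n) : ℂ)) /
       ((Nat.factorial (N - n) : ℂ) * (Nat.factorial (2 * N) : ℂ)))

theorem stmt10 (N : ℕ) :
    ∀ k ≤ 2 * N,
      iteratedDeriv k (fun z : ℂ => Complex.exp z * padeP N (-z) - padeP N z) 0 = 0 := by
  intro k hk
  classical
  set c : ℕ → ℂ := fun n =>
    (((N.factorial : ℂ) * ((2 * N - n).factorial : ℂ)) /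
      (((N - n).factorial : ℂ) * ((2 * N).factorial : ℂ))) / (n.factorial : ℂ) with hc
  set c' : ℕ → ℂ := fun n => (-1 : ℂ) ^ n * c n with hc'
  have hp : ∀ z : ℂ, padeP N z = ∑ n ∈ range (N + 1), c n * z ^ n := by
    intro z
    unfold padeP
    exact Finset.sum_congr rfl fun n _ => by rw [hc]; ring
  have hp' : ∀ z : ℂ, padeP N (-z) = ∑ n ∈ range (N + 1), c' n * z ^ n := by
    intro z
    rw [hp]
    exact Finset.sum_congr rfl fun n _ => by rw [hc', neg_pow]; ring
  have hfun : (fun z : ℂ => Complex.exp z * padeP N (-z) - padeP N z)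
      = (fun z : ℂ => Complex.exp z * ∑ n ∈ range (N + 1), c' n * z ^ n)
        - (fun z : ℂ => ∑ n ∈ range (N + 1), c n * z ^ n) := by
    funext z
    rw [hp' z, hp z]
    rfl
  rw [hfun]
  have h1 : ContDiff ℂ ⊤ (fun z : ℂ => Complex.exp z * ∑ n ∈ range (N + 1), c' n * z ^ n) :=
    Complex.contDiff_exp.mul (contDiff_poly _ _)
  have h2 := contDiff_poly (range (N + 1)) c
  rw [show iteratedDeriv k
        ((fun z : ℂ => Complex.exp z * ∑ n ∈ range (N + 1), c' n * z ^ n)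
          - fun z : ℂ => ∑ n ∈ range (N + 1), c n * z ^ n) 0
      = iteratedDeriv k (fun z : ℂ => Complex.exp z * ∑ n ∈ range (N + 1), c' n * z ^ n) 0
        - iteratedDeriv k (fun z : ℂ => ∑ n ∈ range (N + 1), c n * z ^ n) 0 from by
    simp only [← iteratedDerivWithin_univ]
    exact iteratedDerivWithin_sub (Set.mem_univ 0) uniqueDiffOn_univ
      ((h1.of_le le_top).contDiffWithinAt) ((h2.of_le le_top).contDiffWithinAt)]
  rw [iter_exp_mul _ (contDiff_poly _ _) k, iter_poly]
  simp only [iter_poly, eval0, Complex.exp_zero, one_mul]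
  set r : ℂ := (N.factorial : ℂ) / ((2 * N).factorial : ℂ) with hr
  have hfac : ∀ m : ℕ, ((m.factorial : ℕ) : ℂ) ≠ 0 :=
    fun m => Nat.cast_ne_zero.mpr (Nat.factorial_ne_zero m)
  have hstep : ∀ x ∈ range (k + 1),
      (k.choose x : ℂ) * (if x ∈ Finset.range (N + 1) then c' x * (x.factorial : ℂ) else 0)
        = r * ((-1 : ℂ) ^ x * (k.choose x : ℂ) * (((2 * N - x).descFactorial N : ℕ) : ℂ)) := by
    intro x hx
    have hx2N : x ≤ 2 * N := le_trans (by simpa [Nat.lt_succ_iff] using hx) hk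
    by_cases hxN : x ≤ N
    · rw [if_pos (by simpa [Nat.lt_succ_iff] using hxN)]
      have hd : (((2 * N - x).descFactorial N : ℕ) : ℂ)
          = ((2 * N - x).factorial : ℂ) / ((N - x).factorial : ℂ) := by
        rw [descF_cast (by omega : N ≤ 2 * N - x),
          show 2 * N - x - N = N - x from by omega]
      have hcx : c x * (x.factorial : ℂ)
          = ((N.factorial : ℂ) * ((2 * N - x).factorial : ℂ)) /
              (((N - x).factorial : ℂ) * ((2 * N).factorial : ℂ)) := by
        rw [hc]; exact div_mul_cancel₀ _ (hfac x)
      rw [hc']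
      rw [show (-1 : ℂ) ^ x * c x * (x.factorial : ℂ) = (-1 : ℂ) ^ x * (c x * x.factorial) from
        by ring, hcx, hd, hr]
      field_simp
    · rw [if_neg (by simpa [Nat.lt_succ_iff] using hxN)]
      rw [Nat.descFactorial_eq_zero_iff_lt.mpr (by omega : 2 * N - x < N)]
      simp
  rw [Finset.sum_congr rfl hstep, ← Finset.mul_sum, key k N (2 * N) hk]
  by_cases hkN : k ≤ N
  · rw [if_pos (by simpa [Nat.lt_succ_iff] using hkN)]
    have h1 : ((N.descFactorial k : ℕ) : ℂ) = (N.factorial : ℂ) / ((N - k).factorial : ℂ) :=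
      descF_cast hkN
    have h2 : (((2 * N - k).descFactorial (N - k) : ℕ) : ℂ)
        = ((2 * N - k).factorial : ℂ) / ((N.factorial : ℂ)) := by
      rw [descF_cast (by omega : N - k ≤ 2 * N - k),
        show 2 * N - k - (N - k) = N from by omega]
    have hck : c k * (k.factorial : ℂ)
        = ((N.factorial : ℂ) * ((2 * N - k).factorial : ℂ)) /
            (((N - k).factorial : ℂ) * ((2 * N).factorial : ℂ)) := by
      rw [hc]; exact div_mul_cancel₀ _ (hfac k)
    rw [h1, h2, hck, hr]
    field_simp [hfac N, hfac (N - k), hfac (2 * N)]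
    ring
  · rw [if_neg (by simpa [Nat.lt_succ_iff] using hkN)]
    rw [Nat.descFactorial_eq_zero_iff_lt.mpr (by omega : N < k)]
    simp
end
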